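/- Let f be a complex polynomial, m ≥ 0 an integer, and z ∈ ℂ with f(z) ≠ 0. Then the m-th derivative at z of the logarithmic derivative w ↦ f'(w)/f(w) satisfies (f'/f)^{(m)}(z) = Σ_{j=0}^{m} ((-1)^j/(j+1)) · binom(m+1, j+1) · ( (f^{j+1})^{(m+1)}(z) ) / f(z)^{j+1}, where (f^{j+1})^{(m+1)} denotes the (m+1)-st derivative of the polynomial f raised to the power j+1. -/

import Mathlib

open Polynomial Finset Topology

private lemma contDiff_eval (p : ℂ[X]) : ContDiff ℂ (⊤ : ℕ∞) fun x : ℂ => p.eval x := by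
  induction p using Polynomial.induction_on' with
  | add p q hp hq => simpa using hp.add hq
  | monomial n a => simpa [Polynomial.eval_monomial] using contDiff_const.mul (contDiff_id.pow n)

private lemma iteratedDeriv_polyeval (n : ℕ) (p : ℂ[X]) :
    iteratedDeriv n (fun w : ℂ => p.eval w) = fun w => (derivative^[n] p).eval w := by
  induction n generalizing p with
  | zero => simp
  | succ n ih =>
    rw [iteratedDeriv_succ']
    have h : deriv (fun w : ℂ => p.eval w) = fun w => (derivative p).eval w :=
      funext fun w => Polynomial.deriv p
    rw [h, ih, Function.iterate_succ_apply]

private lemma itDW_open {U : Set ℂ} (hU : IsOpen U) {z : ℂ} (hz : z ∈ U) (n : ℕ) (g : ℂ → ℂ) :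
    iteratedDerivWithin n g U z = iteratedDeriv n g z := by
  simp only [iteratedDerivWithin, iteratedDeriv, iteratedFDerivWithin_of_isOpen n hU hz]


private lemma keyvanish {U : Set ℂ} (hU : IsOpen U) {z : ℂ} (hz : z ∈ U) {q : ℂ[X]}
    (hq : q.eval z = 0) :
    ∀ (k n : ℕ) (s : ℂ → ℂ), ContDiffOn ℂ (⊤ : ℕ∞) s U → k ≤ n →
      iteratedDeriv k (fun w => q.eval w ^ (n + 1) * s w) z = 0 := by
  intro k
  induction k with
  | zero => intro n s _ _; simp [iteratedDeriv_zero, hq]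
  | succ k ih =>
    intro n s hs hkn
    obtain ⟨n, rfl⟩ : ∃ n', n = n' + 1 := ⟨n - 1, by omega⟩
    rw [iteratedDeriv_succ']
    have hds : ContDiffOn ℂ (⊤ : ℕ∞) (deriv s) U :=
      hs.deriv_of_isOpen hU (by exact_mod_cast le_of_eq (by rfl))
    have hev : deriv (fun w => q.eval w ^ (n + 1 + 1) * s w) =ᶠ[𝓝 z]
        fun w => q.eval w ^ (n + 1) *
          (((n : ℂ) + 2) * (derivative q).eval w * s w + q.eval w * deriv s w) := by
      filter_upwards [hU.mem_nhds hz] with w hw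
      have hdsw : DifferentiableAt ℂ s w :=
        (hs.contDiffAt (hU.mem_nhds hw)).differentiableAt (by simp)
      have hqd : DifferentiableAt ℂ (fun x : ℂ => (q ^ (n + 1 + 1)).eval x) w :=
        Polynomial.differentiableAt _
      have e1 : (fun w : ℂ => q.eval w ^ (n + 1 + 1) * s w)
          = fun w : ℂ => (q ^ (n + 1 + 1)).eval w * s w := by
        funext w; simp [eval_pow]
      rw [e1, deriv_fun_mul hqd hdsw, Polynomial.deriv, derivative_pow]
      simp only [eval_mul, eval_C, eval_pow]
      push_cast
      ring
    rw [hev.iteratedDeriv_eq]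
    exact ih n _ (((contDiffOn_const.mul (contDiff_eval _).contDiffOn).mul hs).add
      ((contDiff_eval _).contDiffOn.mul hds)) (by omega)

private lemma eqOnU (f : ℂ[X]) (z : ℂ) (hc : f.eval z ≠ 0) (m : ℕ) (w : ℂ) (hw : f.eval w ≠ 0) :
    (derivative f).eval w / f.eval w =
      (∑ j ∈ range (m + 1),
          C ((-1 : ℂ) ^ j / ((j : ℂ) + 1)) * derivative ((C (f.eval z)⁻¹ * f - 1) ^ (j + 1))).eval w
        + (C (f.eval z)⁻¹ * f - 1).eval w ^ (m + 1) *
          ((-1 : ℂ) ^ (m + 1) * ((derivative f).eval w / f.eval w)) := by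
  set c := f.eval z with hcdef
  set q : ℂ[X] := C c⁻¹ * f - 1 with hqdef
  have hval : ∀ j : ℕ,
      (C ((-1 : ℂ) ^ j / ((j : ℂ) + 1)) * derivative (q ^ (j + 1))).eval w
        = (-(q.eval w)) ^ j * (c⁻¹ * (derivative f).eval w) := by
    intro j
    have hj : ((j : ℂ) + 1) ≠ 0 := Nat.cast_add_one_ne_zero j
    have hdq : derivative q = C c⁻¹ * derivative f := by
      simp [hqdef]
    rw [derivative_pow, hdq]
    simp only [eval_mul, eval_C, eval_pow, Nat.add_sub_cancel, Nat.cast_add, Nat.cast_one]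
    rw [div_mul_eq_mul_div, div_eq_iff hj, neg_pow]
    ring
  rw [eval_finset_sum]
  simp only [hval]
  rw [← Finset.sum_mul]
  set S : ℂ := ∑ j ∈ range (m + 1), (-(q.eval w)) ^ j with hS
  have hgeom : S * (-(q.eval w) - 1) = (-(q.eval w)) ^ (m + 1) - 1 := geom_sum_mul _ _
  have hqw : q.eval w = c⁻¹ * f.eval w - 1 := by simp [hqdef]
  have e : S * (c⁻¹ * f.eval w) = 1 - (-(q.eval w)) ^ (m + 1) := by
    have h2 : -(q.eval w) - 1 = -(c⁻¹ * f.eval w) := by rw [hqw]; ring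
    rw [h2] at hgeom
    linear_combination -hgeom
  have hnp : (-1 : ℂ) ^ (m + 1) * q.eval w ^ (m + 1) = (-(q.eval w)) ^ (m + 1) := by
    rw [neg_pow]; ring
  calc (derivative f).eval w / f.eval w
      = (S * (c⁻¹ * f.eval w)) * ((derivative f).eval w / f.eval w)
        + (-(q.eval w)) ^ (m + 1) * ((derivative f).eval w / f.eval w) := by
        rw [e]; ring
    _ = S * (c⁻¹ * (derivative f).eval w)
        + q.eval w ^ (m + 1) * ((-1 : ℂ) ^ (m + 1) * ((derivative f).eval w / f.eval w)) := by
        rw [← hnp]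
        field_simp

private lemma qpow_expand_aux (f : ℂ[X]) (c : ℂ) (z : ℂ) (m j : ℕ) :
    (derivative^[m + 1] ((C c⁻¹ * f - 1) ^ (j + 1))).eval z
      = ∑ i ∈ range (j + 1),
          (-1 : ℂ) ^ ((i + 1) + (j + 1)) * (c⁻¹) ^ (i + 1) * ((j + 1).choose (i + 1) : ℂ) *
            (derivative^[m + 1] (f ^ (i + 1))).eval z := by
  have hterm : ∀ i,
      (-1 : ℂ[X]) ^ ((i + 1) + (j + 1)) * (C c⁻¹ * f) ^ (i + 1) * (1 : ℂ[X]) ^ (j + 1 - (i + 1)) *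
          ((j + 1).choose (i + 1) : ℂ[X])
        = C ((-1 : ℂ) ^ ((i + 1) + (j + 1)) * (c⁻¹) ^ (i + 1) * ((j + 1).choose (i + 1) : ℂ))
            * f ^ (i + 1) := by
    intro i
    simp only [map_mul, map_pow, map_neg, map_one, C_eq_natCast, mul_pow, one_pow, mul_one]
    ring
  rw [sub_pow, iterate_derivative_sum, Finset.sum_range_succ']
  have h0 : (-1 : ℂ[X]) ^ (0 + (j + 1)) * (C c⁻¹ * f) ^ 0 * (1 : ℂ[X]) ^ (j + 1 - 0) *
      ((j + 1).choose 0 : ℂ[X]) = C ((-1 : ℂ) ^ (j + 1)) := by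
    have : ((j + 1).choose 0 : ℂ[X]) = 1 := by simp
    rw [this, pow_zero, one_pow, mul_one, mul_one, zero_add]
    rw [show (-1 : ℂ[X]) = C (-1 : ℂ) by simp, ← map_pow]
    simp
  rw [h0, iterate_derivative_C (by omega)]
  simp only [hterm, iterate_derivative_C_mul]
  rw [add_zero, eval_finset_sum]
  simp [eval_mul, eval_C]

private lemma combo_aux (f : ℂ[X]) (z : ℂ) (hc : f.eval z ≠ 0) (m : ℕ) :
    ∑ j ∈ range (m + 1), ((-1 : ℂ) ^ j / ((j : ℂ) + 1)) *
        ∑ i ∈ range (j + 1),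
          (-1 : ℂ) ^ ((i + 1) + (j + 1)) * ((f.eval z)⁻¹) ^ (i + 1) *
            ((j + 1).choose (i + 1) : ℂ) * (derivative^[m + 1] (f ^ (i + 1))).eval z
      = ∑ j ∈ range (m + 1),
          ((-1 : ℂ) ^ j / ((j : ℂ) + 1)) * ((m + 1).choose (j + 1) : ℂ) *
            ((derivative^[m + 1] (f ^ (j + 1))).eval z / (f.eval z) ^ (j + 1)) := by
  set c := f.eval z with hcdef
  set B : ℕ → ℂ := fun i => (derivative^[m + 1] (f ^ (i + 1))).eval z with hB
  have hsign : ∀ i j : ℕ, (-1 : ℂ) ^ j * (-1 : ℂ) ^ ((i + 1) + (j + 1)) = (-1) ^ i := by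
    intro i j
    rw [← pow_add, show j + ((i + 1) + (j + 1)) = i + 2 * (j + 1) by ring, pow_add, pow_mul]
    norm_num
  have hdiv : ∀ i j : ℕ, (((j + 1).choose (i + 1) : ℂ)) / ((j : ℂ) + 1)
      = ((j.choose i : ℂ)) / ((i : ℂ) + 1) := by
    intro i j
    have hj : ((j : ℂ) + 1) ≠ 0 := Nat.cast_add_one_ne_zero j
    have hi : ((i : ℂ) + 1) ≠ 0 := Nat.cast_add_one_ne_zero i
    rw [div_eq_div_iff hj hi]
    have h := Nat.add_one_mul_choose_eq j i
    have h' : (j + 1).choose (i + 1) * (i + 1) = j.choose i * (j + 1) := by rw [← h]; ring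
    exact_mod_cast h'
  simp only [Finset.mul_sum]
  rw [Finset.sum_comm' (t' := range (m + 1)) (s' := fun i => Icc i m)
    (by intro x y; simp only [Finset.mem_range, Finset.mem_Icc]; omega)]
  refine Finset.sum_congr rfl fun i hi => ?_
  have hinner : ∀ j ∈ Icc i m,
      ((-1 : ℂ) ^ j / ((j : ℂ) + 1)) *
          ((-1 : ℂ) ^ ((i + 1) + (j + 1)) * (c⁻¹) ^ (i + 1) *
            ((j + 1).choose (i + 1) : ℂ) * B i)
        = ((-1 : ℂ) ^ i * (c⁻¹) ^ (i + 1) * B i / ((i : ℂ) + 1)) * (j.choose i : ℂ) := by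
    intro j _
    calc ((-1 : ℂ) ^ j / ((j : ℂ) + 1)) *
          ((-1 : ℂ) ^ ((i + 1) + (j + 1)) * (c⁻¹) ^ (i + 1) *
            ((j + 1).choose (i + 1) : ℂ) * B i)
        = ((-1 : ℂ) ^ j * (-1 : ℂ) ^ ((i + 1) + (j + 1))) * ((c⁻¹) ^ (i + 1) * B i) *
            (((j + 1).choose (i + 1) : ℂ) / ((j : ℂ) + 1)) := by ring
      _ = ((-1 : ℂ) ^ i) * ((c⁻¹) ^ (i + 1) * B i) * ((j.choose i : ℂ) / ((i : ℂ) + 1)) := by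
            rw [hsign, hdiv]
      _ = ((-1 : ℂ) ^ i * (c⁻¹) ^ (i + 1) * B i / ((i : ℂ) + 1)) * (j.choose i : ℂ) := by ring
  rw [Finset.sum_congr rfl hinner, ← Finset.mul_sum]
  have hhs : ∑ j ∈ Icc i m, ((j.choose i : ℂ)) = ((m + 1).choose (i + 1) : ℂ) := by
    rw [← Nat.cast_sum, Nat.sum_Icc_choose]
  rw [hhs]
  ring

theorem stmt11 (f : Polynomial ℂ) (m : ℕ) (z : ℂ) (hz : f.eval z ≠ 0) :
    iteratedDeriv m (fun w : ℂ => (Polynomial.derivative f).eval w / f.eval w) z =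
      ∑ j ∈ Finset.range (m + 1),
        ((-1 : ℂ) ^ j / ((j : ℂ) + 1)) * ((m + 1).choose (j + 1) : ℂ) *
          ((Polynomial.derivative^[m + 1] (f ^ (j + 1))).eval z / (f.eval z) ^ (j + 1)) := by
  have hc : f.eval z ≠ 0 := hz
  set U : Set ℂ := {w : ℂ | f.eval w ≠ 0} with hUdef
  have hU : IsOpen U := by
    have h : U = (fun w : ℂ => f.eval w) ⁻¹' {(0 : ℂ)}ᶜ := by
      ext w; simp [hUdef]
    rw [h]
    exact isOpen_compl_singleton.preimage f.continuous
  have hzU : z ∈ U := hz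
  set c := f.eval z with hcdef
  set q : ℂ[X] := C c⁻¹ * f - 1 with hqdef
  have hq0 : q.eval z = 0 := by
    simp [hqdef, ← hcdef, inv_mul_cancel₀ hc]
  set P : ℂ[X] := ∑ j ∈ range (m + 1), C ((-1 : ℂ) ^ j / ((j : ℂ) + 1)) * derivative (q ^ (j + 1))
    with hPdef
  set s0 : ℂ → ℂ := fun w => (-1 : ℂ) ^ (m + 1) * ((derivative f).eval w / f.eval w) with hs0
  have hdivCD : ContDiffOn ℂ (⊤ : ℕ∞) (fun w => (derivative f).eval w / f.eval w) U :=
    ContDiffOn.div (contDiff_eval _).contDiffOn (contDiff_eval _).contDiffOn (fun w hw => hw)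
  have hs0CD : ContDiffOn ℂ (⊤ : ℕ∞) s0 U := contDiffOn_const.mul hdivCD
  have hEq : Set.EqOn (fun w : ℂ => (derivative f).eval w / f.eval w)
      ((fun w : ℂ => P.eval w) + fun w : ℂ => q.eval w ^ (m + 1) * s0 w) U := by
    intro w hw
    exact eqOnU f z hc m w hw
  have hcast : ((m : ℕ) : WithTop ℕ∞) ≤ ((⊤ : ℕ∞) : WithTop ℕ∞) := by exact_mod_cast le_top
  calc iteratedDeriv m (fun w : ℂ => (derivative f).eval w / f.eval w) z
      = iteratedDerivWithin m (fun w : ℂ => (derivative f).eval w / f.eval w) U z :=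
        (itDW_open hU hzU m _).symm
    _ = iteratedDerivWithin m
          ((fun w : ℂ => P.eval w) + fun w : ℂ => q.eval w ^ (m + 1) * s0 w) U z :=
        iteratedDerivWithin_congr hEq hzU
    _ = iteratedDerivWithin m (fun w : ℂ => P.eval w) U z
        + iteratedDerivWithin m (fun w : ℂ => q.eval w ^ (m + 1) * s0 w) U z :=
        iteratedDerivWithin_add hzU hU.uniqueDiffOn
          (((contDiff_eval P).of_le hcast).contDiffOn z hzU)
          (((((contDiff_eval q).pow (m + 1)).contDiffOn.mul hs0CD)).of_le hcast z hzU)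
    _ = (derivative^[m] P).eval z
        + iteratedDeriv m (fun w : ℂ => q.eval w ^ (m + 1) * s0 w) z := by
        rw [itDW_open hU hzU, itDW_open hU hzU, iteratedDeriv_polyeval]
    _ = (derivative^[m] P).eval z := by
        rw [keyvanish hU hzU hq0 m m s0 hs0CD le_rfl, add_zero]
    _ = ∑ j ∈ range (m + 1),
          ((-1 : ℂ) ^ j / ((j : ℂ) + 1)) * (derivative^[m + 1] (q ^ (j + 1))).eval z := by
        rw [hPdef, iterate_derivative_sum, eval_finset_sum]
        refine Finset.sum_congr rfl fun j _ => ?_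
        rw [iterate_derivative_C_mul, ← Function.iterate_succ_apply, eval_mul, eval_C]
    _ = ∑ j ∈ range (m + 1), ((-1 : ℂ) ^ j / ((j : ℂ) + 1)) *
          ∑ i ∈ range (j + 1),
            (-1 : ℂ) ^ ((i + 1) + (j + 1)) * (c⁻¹) ^ (i + 1) *
              ((j + 1).choose (i + 1) : ℂ) * (derivative^[m + 1] (f ^ (i + 1))).eval z := by
        refine Finset.sum_congr rfl fun j _ => ?_
        rw [hqdef, qpow_expand_aux f c z m j]
    _ = ∑ j ∈ Finset.range (m + 1),
        ((-1 : ℂ) ^ j / ((j : ℂ) + 1)) * ((m + 1).choose (j + 1) : ℂ) *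
          ((Polynomial.derivative^[m + 1] (f ^ (j + 1))).eval z / c ^ (j + 1)) := by
        exact combo_aux f z hc m
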